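/- Let n, r be natural numbers with r ≤ n and let x be a complex (n+1)×(r+1) matrix, with rows indexed by {0,…,n}. For row indices i₀,…,i_r let ⟨i₀,…,i_r⟩ denote the determinant of the (r+1)×(r+1) matrix whose p-th row is the i_p-th row of x. Then for all row indices i₀,i₁,…,i_r and j₀,j₁ in {0,…,n} the three-term Plücker relation holds: ⟨i₀,i₁,i₂,…,i_r⟩·⟨j₀,j₁,i₂,…,i_r⟩ = ⟨j₀,i₁,i₂,…,i_r⟩·⟨i₀,j₁,i₂,…,i_r⟩ + ⟨j₁,i₁,i₂,…,i_r⟩·⟨j₀,i₀,i₂,…,i_r⟩. -/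

import Mathlib

open Matrix in
private lemma plucker_det_updateRow_sum {m : ℕ} {ι : Type*} [DecidableEq ι] (M : Matrix (Fin m) (Fin m) ℂ)
    (j : Fin m) (s : Finset ι) (c : ι → ℂ) (u : ι → Fin m → ℂ) :
    (M.updateRow j (∑ k ∈ s, c k • u k)).det = ∑ k ∈ s, c k * (M.updateRow j (u k)).det := by
  induction s using Finset.induction_on with
  | empty =>
      simp only [Finset.sum_empty]
      exact Matrix.det_eq_zero_of_row_eq_zero j (by simp)
  | insert k t hk ih =>
      rw [Finset.sum_insert hk, Matrix.det_updateRow_add, Matrix.det_updateRow_smul,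
        Finset.sum_insert hk, ih]

open Matrix in
private lemma plucker_cramer_aux {m : ℕ} (v : Fin (m+2) → (Fin (m+1) → ℂ))
    (c : Fin (m+1) → ℂ) (ℓ : (Fin (m+1) → ℂ) → ℂ) (hℓ : ∀ y, ℓ y = ∑ j, c j * y j) :
    ∑ k : Fin (m+2), (-1:ℂ)^(k:ℕ) * ℓ (v k) *
      Matrix.det (Matrix.of fun p q => v (k.succAbove p) q) = 0 := by
  set N : Matrix (Fin (m+2)) (Fin (m+2)) ℂ :=
    Matrix.of fun a b => Fin.cases (motive := fun _ => ℂ) (ℓ (v a)) (fun b' => v a b') b with hN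
  have hrow : (∑ k : Fin (m+2), (Fin.cases (motive := fun _ => ℂ) 0 c k) • N.transpose k)
      = N.transpose 0 := by
    funext a
    simp only [Finset.sum_apply, Pi.smul_apply, Matrix.transpose_apply, smul_eq_mul,
      Fin.sum_univ_succ, Fin.cases_zero, Fin.cases_succ, zero_mul, zero_add, hN,
      Matrix.of_apply]
    rw [hℓ (v a), Fin.sum_univ_succ]
  have hzero : N.det = 0 := by
    have h1 := Matrix.det_updateRow_sum N.transpose 0 (Fin.cases (motive := fun _ => ℂ) 0 c)
    rw [hrow, Matrix.updateRow_eq_self] at h1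
    rw [← Matrix.det_transpose N, h1]
    simp
  have hdet := Matrix.det_succ_column_zero N
  rw [hzero] at hdet
  rw [eq_comm] at hdet
  refine Eq.trans (Finset.sum_congr rfl fun k _ => ?_) hdet
  have h1 : N k 0 = ℓ (v k) := rfl
  have h2 : (N.submatrix k.succAbove Fin.succ) = Matrix.of fun p q => v (k.succAbove p) q := by
    ext p q; simp [hN]
  rw [h1, h2]


/-- **Three-term Plücker relation.**
Let `x` be a complex `(n+1) × (r+1)` matrix (`1 ≤ r ≤ n`).  For row indices
`i : Fin (r+1) → Fin (n+1)`, `minor i` is the determinant of the `(r+1) × (r+1)` matrix whose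
`p`-th row is the `i p`-th row of `x`.  Then
`⟨i₀,i₁,i₂,…⟩·⟨j₀,j₁,i₂,…⟩ = ⟨j₀,i₁,i₂,…⟩·⟨i₀,j₁,i₂,…⟩ + ⟨j₁,i₁,i₂,…⟩·⟨j₀,i₀,i₂,…⟩`. -/
theorem plucker_three_term (n r : ℕ) (hr : 1 ≤ r) (hrn : r ≤ n)
    (x : Matrix (Fin (n+1)) (Fin (r+1)) ℂ)
    (minor : (Fin (r+1) → Fin (n+1)) → ℂ)
    (hminor : ∀ i, minor i = Matrix.det (Matrix.of fun p q => x (i p) q))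
    (i : Fin (r+1) → Fin (n+1)) (j0 j1 : Fin (n+1)) :
    minor i * minor (Function.update (Function.update i 0 j0) ⟨1, by omega⟩ j1) =
      minor (Function.update i 0 j0) * minor (Function.update i ⟨1, by omega⟩ j1)
      + minor (Function.update i 0 j1) *
          minor (Function.update (Function.update i 0 j0) ⟨1, by omega⟩ (i 0)) := by
  obtain ⟨s, rfl⟩ : ∃ s, r = s + 1 := ⟨r - 1, by omega⟩
  have hupd : ∀ (f : Fin (s+2) → Fin (n+1)) (a : Fin (s+2)) (b : Fin (n+1)) (p : Fin (s+2)),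
      Function.update f a b p = if (p : ℕ) = (a : ℕ) then b else f p := by
    intro f a b p
    rcases eq_or_ne p a with h | h
    · subst h; simp
    · rw [Function.update_of_ne h, if_neg (by simpa [Fin.ext_iff] using h)]
  have hsucc : ∀ (k : Fin (s+3)) (p : Fin (s+2)),
      ((k.succAbove p : Fin (s+3)) : ℕ) = if (p : ℕ) < (k : ℕ) then (p : ℕ) else (p : ℕ) + 1 := by
    intro k p
    rw [Fin.succAbove]
    split_ifs with h1 h2 h2
    · rfl
    · exact absurd (by simpa [Fin.lt_def] using h1) h2
    · exact absurd (by simpa [Fin.lt_def] using h2) h1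
    · rfl
  set M0 : Matrix (Fin (s+2)) (Fin (s+2)) ℂ := Matrix.of fun p q => x (i p) q with hM0
  set ℓ : (Fin (s+2) → ℂ) → ℂ := fun y => (M0.updateRow 0 y).det with hℓdef
  set c : Fin (s+2) → ℂ :=
    fun j => (M0.updateRow 0 (fun q => if j = q then 1 else 0)).det with hc
  have hℓ : ∀ y, ℓ y = ∑ j, c j * y j := by
    intro y
    calc ℓ y = (M0.updateRow 0 (∑ j, y j • fun q => if j = q then (1:ℂ) else 0)).det := by
            rw [hℓdef]; congr 1; rw [← pi_eq_sum_univ y]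
      _ = ∑ j, y j * (M0.updateRow 0 (fun q => if j = q then (1:ℂ) else 0)).det :=
            plucker_det_updateRow_sum M0 0 Finset.univ _ _
      _ = ∑ j, c j * y j := by simp [hc, mul_comm]
  set w : Fin (s+3) → Fin (n+1) := fun k =>
    if (k : ℕ) = 0 then i 0 else if (k : ℕ) = 1 then j0 else if (k : ℕ) = 2 then j1
    else i ⟨(k : ℕ) - 1, by omega⟩ with hw
  have key := plucker_cramer_aux (m := s+1) (fun k => x (w k)) c ℓ hℓ
  rw [Fin.sum_univ_succ, Fin.sum_univ_succ, Fin.sum_univ_succ] at key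
  -- tail vanishes
  have htail : ∀ k : Fin s, ℓ (x (w ((k.succ.succ.succ : Fin (s+3))))) = 0 := by
    intro k
    have hwk : w k.succ.succ.succ = i ⟨(k : ℕ) + 2, by omega⟩ := by
      rw [hw]
      simp only [Fin.val_succ]
      rw [if_neg (by omega), if_neg (by omega), if_neg (by omega)]
      exact congrArg i (Fin.ext (by simp))
    rw [hwk, hℓdef]
    refine Matrix.det_zero_of_row_eq (i := (0 : Fin (s+2))) (j := ⟨(k : ℕ) + 2, by omega⟩)
      (by simp [Fin.ext_iff]) ?_
    rw [Matrix.updateRow_self, Matrix.updateRow_ne (by simp [Fin.ext_iff])]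
    rfl
  rw [Finset.sum_eq_zero (fun k _ => by rw [htail]; ring)] at key
  -- values of w at 0,1,2
  have hw0 : w (0 : Fin (s+3)) = i 0 := by simp only [hw]; simp
  have hw1 : w (Fin.succ (0 : Fin (s+2))) = j0 := by simp only [hw]; simp
  have hw2 : w ((0 : Fin (s+1)).succ.succ) = j1 := by simp only [hw]; simp [Nat.mod_eq_of_lt (show 2 < s + 3 by omega)]
  -- values of ℓ
  have hl0 : ℓ (x (i 0)) = minor i := by
    simp only [hℓdef, hminor]
    rw [← hM0]
    congr 1
    have h0 : x (i 0) = M0 0 := rfl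
    rw [h0, Matrix.updateRow_eq_self]
  have hl1 : ℓ (x j0) = minor (Function.update i 0 j0) := by
    simp only [hℓdef, hminor]
    congr 1
    ext p q
    by_cases hp : p = (0 : Fin (s+2))
    · subst hp; simp [hupd]
    · rw [Matrix.updateRow_ne hp, Matrix.of_apply, hupd,
        if_neg (fun h => hp (Fin.ext h))]
      rfl
  have hl2 : ℓ (x j1) = minor (Function.update i 0 j1) := by
    simp only [hℓdef, hminor]
    congr 1
    ext p q
    by_cases hp : p = (0 : Fin (s+2))
    · subst hp; simp [hupd]
    · rw [Matrix.updateRow_ne hp, Matrix.of_apply, hupd,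
        if_neg (fun h => hp (Fin.ext h))]
      rfl
  -- determinant identifications
  have hi0 : ∀ p : Fin (s+2), w (Fin.succAbove 0 p)
      = Function.update (Function.update i 0 j0) ⟨1, by omega⟩ j1 p := by
    intro p
    have hv : ((Fin.succAbove (0 : Fin (s+3)) p : Fin (s+3)) : ℕ) = (p : ℕ) + 1 := by
      rw [hsucc]; simp
    simp only [hw, hupd, hv, Fin.val_zero]
    split_ifs <;> first
      | rfl
      | omega
      | exact (‹False›).elim
      | (refine congrArg i (Fin.ext ?_); simp only [Fin.val_zero]; omega)
      | (rcases eq_or_ne (p : ℕ) 1 with hq | hq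
         · exact absurd hq (by omega)
         · rw [if_neg hq]
           first
             | rfl
             | omega
             | exact congrArg i (Fin.ext (by simp only [Fin.val_zero]; omega)))
      | (rcases eq_or_ne (p : ℕ) 1 with hq | hq
         · rw [if_pos hq]
           first
             | rfl
             | omega
             | exact congrArg i (Fin.ext (by simp only [Fin.val_zero]; omega))
         · exact absurd hq (by omega))
      | (rcases eq_or_ne (p : ℕ) 0 with hq | hq
         · exact absurd hq (by omega)
         · erw [if_neg hq]
           all_goals first
             | rfl
             | omega
             | exact congrArg i (Fin.ext (by simp only [Fin.val_zero]; omega)))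
      | (rcases eq_or_ne (p : ℕ) 0 with hq | hq
         · erw [if_pos hq]
           all_goals first
             | rfl
             | omega
             | exact congrArg i (Fin.ext (by simp only [Fin.val_zero]; omega))
         · exact absurd hq (by omega))
  have hd0 : (Matrix.of fun p q => x (w (Fin.succAbove 0 p)) q).det
      = minor (Function.update (Function.update i 0 j0) ⟨1, by omega⟩ j1) := by
    rw [hminor]
    congr 1
    ext p q
    rw [Matrix.of_apply, Matrix.of_apply, hi0 p]
  have hi1 : ∀ p : Fin (s+2), w ((Fin.succ (0 : Fin (s+2))).succAbove p)
      = Function.update i ⟨1, by omega⟩ j1 p := by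
    intro p
    have hv : (((Fin.succ (0 : Fin (s+2))).succAbove p : Fin (s+3)) : ℕ)
        = if (p : ℕ) < 1 then (p : ℕ) else (p : ℕ) + 1 := by
      rw [hsucc]; simp
    simp only [hw, hupd, hv, Fin.val_zero]
    split_ifs <;> first
      | rfl
      | omega
      | exact (‹False›).elim
      | (refine congrArg i (Fin.ext ?_); simp only [Fin.val_zero]; omega)
      | (rcases eq_or_ne (p : ℕ) 1 with hq | hq
         · exact absurd hq (by omega)
         · rw [if_neg hq]
           first
             | rfl
             | omega
             | exact congrArg i (Fin.ext (by simp only [Fin.val_zero]; omega)))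
      | (rcases eq_or_ne (p : ℕ) 1 with hq | hq
         · rw [if_pos hq]
           first
             | rfl
             | omega
             | exact congrArg i (Fin.ext (by simp only [Fin.val_zero]; omega))
         · exact absurd hq (by omega))
      | (rcases eq_or_ne (p : ℕ) 0 with hq | hq
         · exact absurd hq (by omega)
         · erw [if_neg hq]
           all_goals first
             | rfl
             | omega
             | exact congrArg i (Fin.ext (by simp only [Fin.val_zero]; omega)))
      | (rcases eq_or_ne (p : ℕ) 0 with hq | hq
         · erw [if_pos hq]
           all_goals first
             | rfl
             | omega
             | exact congrArg i (Fin.ext (by simp only [Fin.val_zero]; omega))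
         · exact absurd hq (by omega))
  have hd1 : (Matrix.of fun p q => x (w ((Fin.succ (0 : Fin (s+2))).succAbove p)) q).det
      = minor (Function.update i ⟨1, by omega⟩ j1) := by
    rw [hminor]
    congr 1
    ext p q
    rw [Matrix.of_apply, Matrix.of_apply, hi1 p]
  -- the k = 2 term, with a row swap
  set σ : Equiv.Perm (Fin (s+2)) := Equiv.swap 0 ⟨1, by omega⟩ with hσ
  have hswap : ∀ p : Fin (s+2),
      ((σ p : Fin (s+2)) : ℕ) = if (p:ℕ) = 0 then 1 else if (p:ℕ) = 1 then 0 else (p:ℕ) := by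
    intro p
    by_cases h1 : p = (0 : Fin (s+2))
    · subst h1; simp [hσ, Equiv.swap_apply_left]
    · by_cases h2 : p = (⟨1, by omega⟩ : Fin (s+2))
      · subst h2; simp [hσ, Equiv.swap_apply_right]
      · rw [hσ, Equiv.swap_apply_of_ne_of_ne h1 h2,
          if_neg (fun h => h1 (Fin.ext (h.trans (Fin.val_zero _).symm))),
          if_neg (fun h => h2 (Fin.ext h))]
  have hi2 : ∀ p : Fin (s+2), w (((0 : Fin (s+1)).succ.succ).succAbove (σ p))
      = Function.update (Function.update i 0 j0) ⟨1, by omega⟩ (i 0) p := by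
    intro p
    have hv : ((((0 : Fin (s+1)).succ.succ).succAbove (σ p) : Fin (s+3)) : ℕ)
        = if (p:ℕ) = 0 then 1 else if (p:ℕ) = 1 then 0 else (p:ℕ) + 1 := by
      rw [hsucc, hswap]
      have h2 : (((0 : Fin (s+1)).succ.succ : Fin (s+3)) : ℕ) = 2 := by simp
      rw [h2]
      split_ifs <;> omega
    simp only [hw, hupd, hv, Fin.val_zero]
    split_ifs <;> first
      | rfl
      | omega
      | exact (‹False›).elim
      | (refine congrArg i (Fin.ext ?_); simp only [Fin.val_zero]; omega)
      | (rcases eq_or_ne (p : ℕ) 1 with hq | hq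
         · exact absurd hq (by omega)
         · rw [if_neg hq]
           first
             | rfl
             | omega
             | exact congrArg i (Fin.ext (by simp only [Fin.val_zero]; omega)))
      | (rcases eq_or_ne (p : ℕ) 1 with hq | hq
         · rw [if_pos hq]
           first
             | rfl
             | omega
             | exact congrArg i (Fin.ext (by simp only [Fin.val_zero]; omega))
         · exact absurd hq (by omega))
      | (rcases eq_or_ne (p : ℕ) 0 with hq | hq
         · exact absurd hq (by omega)
         · first | (refine (congrArg i (Fin.ext ?_)).trans (if_neg hq).symm; exact Nat.add_sub_cancel _ _) | erw [if_neg hq]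
           all_goals first
             | rfl
             | omega
             | exact congrArg i (Fin.ext (by simp only [Fin.val_zero]; omega)))
      | (rcases eq_or_ne (p : ℕ) 0 with hq | hq
         · first | omega | erw [if_pos hq]
           all_goals first
             | rfl
             | omega
             | exact congrArg i (Fin.ext (by simp only [Fin.val_zero]; omega))
         · exact absurd hq (by omega))
  have hd2 : (Matrix.of fun p q => x (w (((0 : Fin (s+1)).succ.succ).succAbove p)) q).det
      = - minor (Function.update (Function.update i 0 j0) ⟨1, by omega⟩ (i 0)) := by
    rw [hminor]
    have hsub : (Matrix.of fun p q =>
          x (Function.update (Function.update i 0 j0) ⟨1, by omega⟩ (i 0) p) q)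
        = (Matrix.of fun p q =>
            x (w (((0 : Fin (s+1)).succ.succ).succAbove p)) q).submatrix σ id := by
      ext p q
      simp only [Matrix.submatrix_apply, Matrix.of_apply, id_eq]
      rw [hi2 p]
    rw [hsub, Matrix.det_permute, hσ, Equiv.Perm.sign_swap (by simp [Fin.ext_iff])]
    push_cast
    ring
  rw [hw0, hw1, hw2, hl0, hl1, hl2, hd0, hd1, hd2] at key
  simp only [Fin.val_succ, Fin.val_zero] at key
  norm_num at key
  have hone : (⟨1, by omega⟩ : Fin (s+2)) = 1 := by
    apply Fin.ext
    simp
  rw [hone]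
  linear_combination key
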